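/- Fix integers c_{jk} (1 ≤ j < k ≤ n) and ℓ_1,…,ℓ_n, and indices 1 ≤ j_0 < j_1 < ⋯ < j_s ≤ n with s ≥ 2. Assume: ℓ_{j_t} = 0 for 0 ≤ t ≤ s−1 and ℓ_{j_s} > 0; c_{j_0 j_1} = 2; c_{j_1 j_2} = −2 and c_{j_0 j_2} = −2; c_{j_t j_{t+1}} = −1 for 2 ≤ t ≤ s−1; c_{j_p j_q} = 0 whenever 1 ≤ p < q ≤ s and q − p ≥ 2, and c_{j_0 j_q} = 0 for 3 ≤ q ≤ s. Define σ ∈ {+,−}^n by σ_p = − if p ∈ {j_0,…,j_s} and σ_p = + otherwise. Then m_{σ,j_s} = ℓ_{j_s}, m_{σ,j_{s−1}} = ⋯ = m_{σ,j_2} = ℓ_{j_s}, m_{σ,j_1} = 2 ℓ_{j_s}, and m_{σ,j_0} = −2 ℓ_{j_s} < 0. (This is the case, in type B, of a minimal hesitant λ-walk crossing the double edge against the arrow.) -/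
import Mathlib


open Finset

/-- `A_j(x) = ℓ_j − Σ_{k>j} c_{jk} x_k` (for the last index the sum is empty). -/
noncomputable def GKA {n : ℕ} (c : Fin n → Fin n → ℤ) (ℓ : Fin n → ℤ)
    (j : Fin n) (x : Fin n → ℝ) : ℝ :=
  (ℓ j : ℝ) - ∑ k ∈ Finset.univ.filter (fun k : Fin n => j < k), (c j k : ℝ) * x k

/-- The Grossberg–Karshon twisted cube `C(c,ℓ)`. -/
noncomputable def GKcube {n : ℕ} (c : Fin n → Fin n → ℤ) (ℓ : Fin n → ℤ) :
    Set (Fin n → ℝ) :=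
  {x | ∀ j : Fin n, (GKA c ℓ j x < x j ∧ x j < 0) ∨ (0 ≤ x j ∧ x j ≤ GKA c ℓ j x)}

/-- `sgn(t) = 1` for `t < 0` and `−1` for `t ≥ 0`. -/
noncomputable def GKsgn (t : ℝ) : ℝ := if t < 0 then 1 else -1

open Classical in
/-- The density function `ρ`: `ρ(x) = (−1)^n ∏_k sgn(x_k)` on `C(c,ℓ)`, `0` elsewhere. -/
noncomputable def GKrho {n : ℕ} (c : Fin n → Fin n → ℤ) (ℓ : Fin n → ℤ)
    (x : Fin n → ℝ) : ℝ :=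
  if x ∈ GKcube c ℓ then (-1 : ℝ) ^ n * ∏ k : Fin n, GKsgn (x k) else 0

/-- `(C(c,ℓ), ρ)` is untwisted: `C(c,ℓ)` is closed, convex, the convex hull of a
finite set, and `ρ ≡ 1` on `C(c,ℓ)`.  "Twisted" is the negation of this. -/
noncomputable def GKUntwisted {n : ℕ} (c : Fin n → Fin n → ℤ) (ℓ : Fin n → ℤ) : Prop :=
  IsClosed (GKcube c ℓ) ∧ Convex ℝ (GKcube c ℓ) ∧
  (∃ S : Finset (Fin n → ℝ), GKcube c ℓ = convexHull ℝ (S : Set (Fin n → ℝ))) ∧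
  (∀ x ∈ GKcube c ℓ, GKrho c ℓ x = 1)

/-- The Cartier data `m_σ`, defined by downward recursion:
`m_{σ,k} = 0` if `σ_k = +` (encoded `false`), and
`m_{σ,k} = ℓ_k − Σ_{s>k} c_{ks} m_{σ,s}` if `σ_k = −` (encoded `true`). -/
def GKm {n : ℕ} (c : Fin n → Fin n → ℤ) (ℓ : Fin n → ℤ) (σ : Fin n → Bool)
    (k : Fin n) : ℤ :=
  if σ k then
    ℓ k - ∑ s ∈ (Finset.univ.filter fun s : Fin n => k < s).attach,
      c k s.1 * GKm c ℓ σ s.1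
  else 0
termination_by n - k.val
decreasing_by
  have h := s.2
  simp only [Finset.mem_filter, Finset.mem_univ, true_and, Fin.lt_def] at h
  omega

/-- `A` is the Cartan matrix of a complex semisimple Lie algebra of rank `r`,
i.e. a generalized Cartan matrix of finite type: diagonal entries `2`,
nonpositive off-diagonal entries, `A_{ab} = 0 ↔ A_{ba} = 0`, and `A` is
symmetrizable by positive rationals `d_a` with `(d_a A_{ab})` symmetric
positive definite. -/
def IsCartanMatrix {r : ℕ} (A : Matrix (Fin r) (Fin r) ℤ) : Prop :=
  (∀ a, A a a = 2) ∧
  (∀ a b, a ≠ b → A a b ≤ 0) ∧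
  (∀ a b, A a b = 0 ↔ A b a = 0) ∧
  (∃ d : Fin r → ℚ, (∀ a, 0 < d a) ∧
    (∀ a b, d a * (A a b : ℚ) = d b * (A b a : ℚ)) ∧
    (∀ x : Fin r → ℚ, x ≠ 0 → 0 < ∑ a, ∑ b, x a * d a * (A a b : ℚ) * x b))

/-- `(w_0, …, w_s)` is a diagram walk followed by the condition that the final
root appears in `λ`: a `λ`-walk.  (Successive entries are distinct and adjacent
in the Dynkin diagram, and `λ_{w_s} > 0`.) -/
def IsLambdaWalkSeq {r : ℕ} (A : Matrix (Fin r) (Fin r) ℤ) (lam : Fin r → ℤ)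
    {s : ℕ} (w : Fin (s + 1) → Fin r) : Prop :=
  (∀ t : Fin s, w t.castSucc ≠ w t.succ ∧ A (w t.castSucc) (w t.succ) < 0) ∧
  0 < lam (w (Fin.last s))

/-- `(w_0, w_1, …, w_s)` is a hesitant `λ`-walk: `s ≥ 1`, `w_0 = w_1`, the
walking component `(w_1, …, w_s)` is a diagram walk, and `λ_{w_s} > 0`. -/
def IsHesitantLambdaWalkSeq {r : ℕ} (A : Matrix (Fin r) (Fin r) ℤ)
    (lam : Fin r → ℤ) {s : ℕ} (w : Fin (s + 1) → Fin r) : Prop :=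
  1 ≤ s ∧ w 0 = w 1 ∧
  (∀ t : Fin s, 1 ≤ t.val →
    (w t.castSucc ≠ w t.succ ∧ A (w t.castSucc) (w t.succ) < 0)) ∧
  0 < lam (w (Fin.last s))

/-- The word `i = (i_1, …, i_n)` is hesitant-`λ`-walk-avoiding: no subword
(subsequence, given by a strictly increasing reindexing `j`) is a hesitant
`λ`-walk. -/
def HesitantLambdaWalkAvoiding {r n : ℕ} (A : Matrix (Fin r) (Fin r) ℤ)
    (lam : Fin r → ℤ) (i : Fin n → Fin r) : Prop :=
  ¬ ∃ (s : ℕ) (j : Fin (s + 1) → Fin n), StrictMono j ∧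
      IsHesitantLambdaWalkSeq A lam (i ∘ j)

/-- Minimality of a hesitant `λ`-walk `(w_0, …, w_s)`: the entries of the
walking component `w_1, …, w_s` are pairwise distinct, and if `s ≥ 2` then
`λ_{w_t} = 0` for `0 ≤ t ≤ s − 1`. -/
def MinimalHLW {r s : ℕ} (lam : Fin r → ℤ) (w : Fin (s + 1) → Fin r) : Prop :=
  (∀ p q : Fin (s + 1), 1 ≤ p.val → 1 ≤ q.val → w p = w q → p = q) ∧
  (2 ≤ s → ∀ t : Fin (s + 1), t.val ≤ s - 1 → lam (w t) = 0)

lemma GKm_of_false {n : ℕ} (c : Fin n → Fin n → ℤ) (ℓ : Fin n → ℤ) (σ : Fin n → Bool)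
    (k : Fin n) (h : σ k = false) : GKm c ℓ σ k = 0 := by
  rw [GKm]; simp [h]

lemma GKm_of_true {n : ℕ} (c : Fin n → Fin n → ℤ) (ℓ : Fin n → ℤ) (σ : Fin n → Bool)
    (k : Fin n) (h : σ k = true) :
    GKm c ℓ σ k = ℓ k - ∑ q ∈ Finset.univ.filter (fun q : Fin n => k < q),
      c k q * GKm c ℓ σ q := by
  rw [GKm, h]
  simp only [if_true]
  congr 1
  exact Finset.sum_attach _ fun q => c k q * GKm c ℓ σ q

def GKV (L : ℤ) : ℕ → ℤ := fun k => if k = 0 then -2 * L else if k = 1 then 2 * L else L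

lemma GKV_zero (L : ℤ) : GKV L 0 = -2 * L := rfl
lemma GKV_one (L : ℤ) : GKV L 1 = 2 * L := rfl
lemma GKV_of (L : ℤ) (k : ℕ) (h : 2 ≤ k) : GKV L k = L := by
  unfold GKV
  rw [if_neg (by omega), if_neg (by omega)]


/-- Type-`B` computation (crossing the double edge against
the arrow): for indices `j_0 < ⋯ < j_s` (`s ≥ 2`) with `ℓ_{j_t} = 0` for
`t ≤ s−1`, `ℓ_{j_s} > 0`, `c_{j_0 j_1} = 2`, `c_{j_1 j_2} = c_{j_0 j_2} = −2`,
`c_{j_t j_{t+1}} = −1` for `2 ≤ t ≤ s−1`, the remaining `c`'s among the `j`'s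
zero, and `σ` equal to `−` exactly on `{j_0, …, j_s}`:
`m_{σ,j_s} = ℓ_{j_s}`, `m_{σ,j_{s−1}} = ⋯ = m_{σ,j_2} = ℓ_{j_s}`,
`m_{σ,j_1} = 2ℓ_{j_s}`, and `m_{σ,j_0} = −2ℓ_{j_s} < 0`. -/
theorem statement14 {n : ℕ} (c : Fin n → Fin n → ℤ) (ℓ : Fin n → ℤ)
    (s : ℕ) (hs : 2 ≤ s) (j : Fin (s + 1) → Fin n) (hj : StrictMono j)
    (hl0 : ∀ t : Fin (s + 1), t.val ≤ s - 1 → ℓ (j t) = 0)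
    (hls : 0 < ℓ (j (Fin.last s)))
    (hc01 : c (j 0) (j ⟨1, by omega⟩) = 2)
    (hc12 : c (j ⟨1, by omega⟩) (j ⟨2, by omega⟩) = -2)
    (hc02 : c (j 0) (j ⟨2, by omega⟩) = -2)
    (hchain : ∀ t : Fin s, 2 ≤ t.val → c (j t.castSucc) (j t.succ) = -1)
    (hzero : ∀ p q : Fin (s + 1), 1 ≤ p.val → p.val + 2 ≤ q.val →
      c (j p) (j q) = 0)
    (hzero0 : ∀ q : Fin (s + 1), 3 ≤ q.val → c (j 0) (j q) = 0)
    (σ : Fin n → Bool) (hσ : ∀ p, σ p = true ↔ ∃ t, j t = p) :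
    GKm c ℓ σ (j (Fin.last s)) = ℓ (j (Fin.last s)) ∧
    (∀ t : Fin (s + 1), 2 ≤ t.val → t.val ≤ s - 1 →
      GKm c ℓ σ (j t) = ℓ (j (Fin.last s))) ∧
    GKm c ℓ σ (j ⟨1, by omega⟩) = 2 * ℓ (j (Fin.last s)) ∧
    GKm c ℓ σ (j 0) = -2 * ℓ (j (Fin.last s)) ∧
    GKm c ℓ σ (j 0) < 0 := by
  -- key recursion restricted to the walk
  have key : ∀ t : Fin (s + 1), GKm c ℓ σ (j t) =
      ℓ (j t) - ∑ q ∈ Finset.univ.filter (fun q : Fin (s + 1) => t < q),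
        c (j t) (j q) * GKm c ℓ σ (j q) := by
    intro t
    rw [GKm_of_true c ℓ σ (j t) ((hσ (j t)).2 ⟨t, rfl⟩)]
    congr 1
    have himg : (Finset.univ.filter (fun q : Fin (s + 1) => t < q)).image j ⊆
        Finset.univ.filter (fun k : Fin n => j t < k) := by
      intro k hk
      simp only [Finset.mem_image, Finset.mem_filter, Finset.mem_univ, true_and] at hk ⊢
      obtain ⟨q, hq, rfl⟩ := hk
      exact hj hq
    rw [show (∑ k ∈ Finset.univ.filter (fun k : Fin n => j t < k),
        c (j t) k * GKm c ℓ σ k) =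
        ∑ k ∈ (Finset.univ.filter (fun q : Fin (s + 1) => t < q)).image j,
        c (j t) k * GKm c ℓ σ k from
      (Finset.sum_subset himg (by
        intro k hk hk2
        have hσk : σ k = false := by
          rcases Bool.eq_false_or_eq_true (σ k) with h | h
          swap
          · exact h
          obtain ⟨q, rfl⟩ := (hσ k).1 h
          exfalso
          simp only [Finset.mem_filter, Finset.mem_univ, true_and] at hk
          exact absurd (Finset.mem_image_of_mem j (by
            simp only [Finset.mem_filter, Finset.mem_univ, true_and]
            exact hj.lt_iff_lt.mp hk)) hk2
        rw [GKm_of_false c ℓ σ k hσk, mul_zero])).symm]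
    rw [Finset.sum_image (fun a _ b _ h => hj.injective h)]
  -- value function
  have main : ∀ d : ℕ, ∀ t : Fin (s + 1), s - t.val ≤ d →
      GKm c ℓ σ (j t) = GKV (ℓ (j (Fin.last s))) t.val := by
    intro d
    induction d with
    | zero =>
      intro t ht
      have hts : t.val = s := by omega
      have ht' : t = Fin.last s := Fin.ext hts
      rw [key t]
      have : Finset.univ.filter (fun q : Fin (s + 1) => t < q) = ∅ := by
        apply Finset.filter_false_of_mem
        intro q _
        simp only [not_lt, Fin.le_def]
        omega
      rw [this, Finset.sum_empty, ht', GKV_of _ _ (by show 2 ≤ s; omega)]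
      ring
    | succ d ih =>
      intro t ht
      by_cases hts : t.val = s
      · have ht' : t = Fin.last s := Fin.ext hts
        rw [key t]
        have : Finset.univ.filter (fun q : Fin (s + 1) => t < q) = ∅ := by
          apply Finset.filter_false_of_mem
          intro q _
          simp only [not_lt, Fin.le_def]
          omega
        rw [this, Finset.sum_empty, ht', GKV_of _ _ (by show 2 ≤ s; omega)]
        ring
      · have htlt : t.val < s := lt_of_le_of_ne (by omega) hts
        have hℓt : ℓ (j t) = 0 := hl0 t (by omega)
        rw [key t, hℓt]
        rcases Nat.lt_or_ge t.val 2 with h2 | h2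
        · rcases (by omega : t.val = 0 ∨ t.val = 1) with h | h
          · -- t = 0
            have ht0 : t = 0 := Fin.ext h
            have h1 : (⟨1, by omega⟩ : Fin (s + 1)) ∈
                Finset.univ.filter (fun q : Fin (s + 1) => t < q) := by
              simp only [Finset.mem_filter, Finset.mem_univ, true_and, Fin.lt_def]; omega
            have h2m : (⟨2, by omega⟩ : Fin (s + 1)) ∈
                Finset.univ.filter (fun q : Fin (s + 1) => t < q) := by
              simp only [Finset.mem_filter, Finset.mem_univ, true_and, Fin.lt_def]; omega
            have hsub : ({⟨1, by omega⟩, ⟨2, by omega⟩} : Finset (Fin (s + 1))) ⊆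
                Finset.univ.filter (fun q : Fin (s + 1) => t < q) := by
              intro q hq
              simp only [Finset.mem_insert, Finset.mem_singleton] at hq
              rcases hq with rfl | rfl
              · exact h1
              · exact h2m
            have hsum : (∑ q ∈ Finset.univ.filter (fun q : Fin (s + 1) => t < q),
                c (j t) (j q) * GKm c ℓ σ (j q)) =
                ∑ q ∈ ({⟨1, by omega⟩, ⟨2, by omega⟩} : Finset (Fin (s + 1))),
                c (j t) (j q) * GKm c ℓ σ (j q) := by
              symm
              apply Finset.sum_subset hsub
              intro q hq hq2
              simp only [Finset.mem_insert, Finset.mem_singleton] at hq2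
              simp only [Finset.mem_filter, Finset.mem_univ, true_and, Fin.lt_def] at hq
              have hq3 : 3 ≤ q.val := by
                rcases Nat.lt_or_ge q.val 3 with hlt | hge
                · exfalso
                  rcases (by omega : q.val = 1 ∨ q.val = 2) with h1 | h1
                  · exact hq2 (Or.inl (Fin.ext h1))
                  · exact hq2 (Or.inr (Fin.ext h1))
                · exact hge
              rw [ht0, hzero0 q hq3, zero_mul]
            rw [hsum, Finset.sum_pair (by
              intro hcontra
              have := congrArg Fin.val hcontra
              simp at this)]
            have hm1 : GKm c ℓ σ (j ⟨1, by omega⟩) = 2 * ℓ (j (Fin.last s)) := by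
              rw [ih ⟨1, by omega⟩ (by show s - 1 ≤ d; omega)]; exact GKV_one _
            have hm2 : GKm c ℓ σ (j ⟨2, by omega⟩) = ℓ (j (Fin.last s)) := by
              rw [ih ⟨2, by omega⟩ (by show s - 2 ≤ d; omega)]; exact GKV_of _ _ (by norm_num)
            rw [ht0]
            simp only [hm1, hm2, hc01, hc02]
            rw [show ((0 : Fin (s+1)) : ℕ) = 0 from rfl, GKV_zero]
            ring
          · -- t = 1
            have ht1 : t = ⟨1, by omega⟩ := Fin.ext h
            have hsum : (∑ q ∈ Finset.univ.filter (fun q : Fin (s + 1) => t < q),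
                c (j t) (j q) * GKm c ℓ σ (j q)) =
                c (j t) (j ⟨2, by omega⟩) * GKm c ℓ σ (j ⟨2, by omega⟩) := by
              apply Finset.sum_eq_single_of_mem
              · simp only [Finset.mem_filter, Finset.mem_univ, true_and, Fin.lt_def]; omega
              · intro q hq hne
                simp only [Finset.mem_filter, Finset.mem_univ, true_and, Fin.lt_def] at hq
                have hq3 : 3 ≤ q.val := by
                  rcases Nat.lt_or_ge q.val 3 with hlt | hge
                  · exact absurd (Fin.ext (by omega : q.val = 2)) hne
                  · exact hge
                rw [hzero t q (by omega) (by omega), zero_mul]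
            have hm2 : GKm c ℓ σ (j ⟨2, by omega⟩) = ℓ (j (Fin.last s)) := by
              rw [ih ⟨2, by omega⟩ (by show s - 2 ≤ d; omega)]; exact GKV_of _ _ (by norm_num)
            rw [hsum]
            simp only [hm2]
            rw [ht1, hc12, show ((⟨1, by omega⟩ : Fin (s+1)) : ℕ) = 1 from rfl, GKV_one]
            ring
        · -- 2 ≤ t < s
          have hsum : (∑ q ∈ Finset.univ.filter (fun q : Fin (s + 1) => t < q),
              c (j t) (j q) * GKm c ℓ σ (j q)) =
              c (j t) (j ⟨t.val + 1, by omega⟩) * GKm c ℓ σ (j ⟨t.val + 1, by omega⟩) := by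
            apply Finset.sum_eq_single_of_mem
            · simp only [Finset.mem_filter, Finset.mem_univ, true_and, Fin.lt_def]; omega
            · intro q hq hne
              simp only [Finset.mem_filter, Finset.mem_univ, true_and, Fin.lt_def] at hq
              have hq3 : t.val + 2 ≤ q.val := by
                rcases Nat.lt_or_ge q.val (t.val + 2) with hlt | hge
                · exact absurd (Fin.ext (by omega : q.val = t.val + 1)) hne
                · exact hge
              rw [hzero t q (by omega) hq3, zero_mul]
          have hc : c (j t) (j ⟨t.val + 1, by omega⟩) = -1 := by
            have := hchain ⟨t.val, htlt⟩ h2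
            simpa [Fin.castSucc, Fin.succ, Fin.ext_iff] using this
          have hm : GKm c ℓ σ (j ⟨t.val + 1, by omega⟩) = ℓ (j (Fin.last s)) := by
            rw [ih ⟨t.val + 1, by omega⟩ (by show s - (t.val + 1) ≤ d; omega)]
            exact GKV_of _ _ (by show 2 ≤ t.val + 1; omega)
          rw [hsum]
          simp only [hc, hm]
          rw [GKV_of _ _ h2]
          ring
  have hV0 : GKm c ℓ σ (j 0) = -2 * ℓ (j (Fin.last s)) := by
    rw [main s 0 (by show s - (0 : Fin (s+1)).val ≤ s; omega)]
    exact GKV_zero _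
  have hV1 : GKm c ℓ σ (j ⟨1, by omega⟩) = 2 * ℓ (j (Fin.last s)) := by
    rw [main s ⟨1, by omega⟩ (by show s - 1 ≤ s; omega)]
    exact GKV_one _
  refine ⟨?_, ?_, hV1, hV0, by rw [hV0]; omega⟩
  · rw [main s (Fin.last s) (by show s - (Fin.last s).val ≤ s; simp)]
    exact GKV_of _ _ (by show 2 ≤ (Fin.last s).val; simpa using hs)
  · intro t h2t hts
    rw [main s t (by omega)]
    exact GKV_of _ _ h2t
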